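/- For all integers k ≥ 4 and real γ with 0 < γ < 1, the function k ↦ w(1/k, k, γ) is decreasing, i.e., its derivative with respect to k (treating k as a real variable ≥ 4) is negative. -/

import Mathlib

set_option maxHeartbeats 1000000 in
theorem deriv_w_one_over_k_neg (γ : ℝ) (hγ0 : 0 < γ) (hγ1 : γ < 1) :
    ∀ t : ℝ, 4 ≤ t →
      deriv
          (fun s : ℝ =>
            2 * Real.log 2 - 2 * (1 / 2 - 1 / s) ^ 2 -
              γ * Real.log 2 * (2 - (1 - 1 / s) ^ s)) t < 0 := by
  intro t ht
  have ht0 : (0:ℝ) < t := by linarith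
  have ht1 : (1:ℝ) < t := by linarith
  have ht' : t ≠ 0 := ne_of_gt ht0
  have hu : (0:ℝ) < 1 - 1/t := by
    have : 1/t < 1 := by rw [div_lt_one ht0]; linarith
    linarith
  have hu' : (1:ℝ) - 1/t ≠ 0 := ne_of_gt hu
  set L : ℝ := Real.log (1 - 1/t) with hL
  have hinv : HasDerivAt (fun s : ℝ => 1 / s) (-(1/t^2)) t := by
    simpa [one_div] using hasDerivAt_inv ht'
  have hsq : HasDerivAt (fun s : ℝ => (1/2 - 1/s)^2) (2*(1/2-1/t)*(1/t^2)) t := by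
    have h := ((hasDerivAt_const t ((1:ℝ)/2)).sub hinv).pow 2
    refine h.congr_deriv ?_
    simp only [Pi.sub_apply]
    ring
  have h1 : HasDerivAt (fun s : ℝ => 1 - 1/s) (1/t^2) t := by
    have h := (hasDerivAt_const t (1:ℝ)).sub hinv
    refine h.congr_deriv ?_
    ring
  have hlog : HasDerivAt (fun s : ℝ => Real.log (1 - 1/s)) ((1/t^2)/(1-1/t)) t :=
    h1.log hu'
  have hmul : HasDerivAt (fun s : ℝ => s * Real.log (1 - 1/s))
      (1 * L + t * ((1/t^2)/(1-1/t))) t := (hasDerivAt_id t).mul hlog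
  have hbr2 : t * ((1/t^2)/(1-1/t)) = (1/t)/(1-1/t) := by
    rw [show (1:ℝ)/t^2 = (1/t)*(1/t) from by ring,
      show t * ((1/t)*(1/t)/(1-1/t)) = (t*(1/t)) * ((1/t)/(1-1/t)) from by ring,
      mul_one_div_cancel ht', one_mul]
  rw [hbr2, one_mul] at hmul
  have hexp : HasDerivAt (fun s : ℝ => Real.exp (s * Real.log (1 - 1/s)))
      (Real.exp (t * L) * (L + (1/t)/(1-1/t))) t := hmul.exp
  have hF : HasDerivAt
      (fun s : ℝ => 2 * Real.log 2 - 2 * (1 / 2 - 1 / s) ^ 2 -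
        γ * Real.log 2 * (2 - Real.exp (s * Real.log (1 - 1/s))))
      (γ * Real.log 2 * (Real.exp (t * L) * (L + (1/t)/(1-1/t))) - (2 - 4/t) * (1/t^2)) t := by
    have h := ((hasDerivAt_const t (2 * Real.log 2)).sub (hsq.const_mul 2)).sub
      (((hasDerivAt_const t (2:ℝ)).sub hexp).const_mul (γ * Real.log 2))
    refine h.congr_deriv ?_
    ring
  have hev : (fun s : ℝ =>
      2 * Real.log 2 - 2 * (1 / 2 - 1 / s) ^ 2 -
        γ * Real.log 2 * (2 - (1 - 1 / s) ^ s)) =ᶠ[nhds t]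
      (fun s : ℝ => 2 * Real.log 2 - 2 * (1 / 2 - 1 / s) ^ 2 -
        γ * Real.log 2 * (2 - Real.exp (s * Real.log (1 - 1/s)))) := by
    filter_upwards [eventually_gt_nhds ht1] with s hs
    have hs0 : (0:ℝ) < s := by linarith
    have hus : (0:ℝ) < 1 - 1/s := by
      have : 1/s < 1 := by rw [div_lt_one hs0]; linarith
      linarith
    rw [Real.rpow_def_of_pos hus, mul_comm (Real.log (1 - 1/s)) s]
  rw [hev.deriv_eq, hF.deriv]
  -- numeric bound
  have hl2 : Real.log 2 < 1 := by
    have := Real.log_two_lt_d9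
    linarith
  have hl2pos : (0:ℝ) < Real.log 2 := Real.log_pos (by norm_num)
  have hLup : L ≤ -(1/t) := by
    have h := Real.log_le_sub_one_of_pos hu
    rw [hL]
    linarith
  have hLlo : -(1/t) ≤ (1 - 1/t) * L := by
    have h : -L ≤ (1 - 1/t)⁻¹ - 1 := by
      have h0 := Real.log_le_sub_one_of_pos (show (0:ℝ) < (1 - 1/t)⁻¹ by positivity)
      rw [Real.log_inv] at h0
      linarith
    nlinarith [mul_le_mul_of_nonneg_left h (le_of_lt hu), mul_inv_cancel₀ hu']
  have hE1 : Real.exp ((t-1) * L) ≤ 1 := by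
    rw [Real.exp_le_one_iff]
    have hx : 0 < 1/t := by positivity
    nlinarith
  have hA : Real.exp (t * L) = Real.exp ((t-1) * L) * (1 - 1/t) := by
    rw [← Real.exp_log hu, ← hL, ← Real.exp_add]
    ring_nf
  have hbrk : (1 - 1/t) * (L + (1/t)/(1-1/t)) = (1 - 1/t) * L + 1/t := by
    rw [mul_add, mul_comm ((1:ℝ) - 1/t) ((1/t)/(1-1/t)), div_mul_cancel₀ _ hu']
  have hbnn : 0 ≤ (1 - 1/t) * L + 1/t := by linarith
  have hbpos : 0 ≤ L + (1/t)/(1-1/t) := by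
    have h2 : L + (1/t)/(1-1/t) = ((1-1/t)*L + 1/t)/(1-1/t) := by
      rw [add_div, mul_div_cancel_left₀ _ hu']
    rw [h2]
    exact div_nonneg hbnn hu.le
  have hEB : Real.exp (t * L) * (L + (1/t)/(1-1/t)) ≤ (1/t)^2 := by
    rw [hA, mul_assoc, hbrk]
    calc Real.exp ((t-1) * L) * ((1 - 1/t) * L + 1/t)
        ≤ 1 * ((1 - 1/t) * L + 1/t) := mul_le_mul_of_nonneg_right hE1 hbnn
      _ ≤ (1/t)^2 := by nlinarith
  have hγl2 : 0 < γ * Real.log 2 := mul_pos hγ0 hl2pos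
  have hγl2lt : γ * Real.log 2 < 1 := by nlinarith
  have key : γ * Real.log 2 * (Real.exp (t * L) * (L + (1/t)/(1-1/t))) ≤
      γ * Real.log 2 * (1/t)^2 := mul_le_mul_of_nonneg_left hEB (le_of_lt hγl2)
  have hxx : (0:ℝ) < (1/t)^2 := by positivity
  have h2' : γ * Real.log 2 * (1/t)^2 < (1/t)^2 := by nlinarith
  have hrhs : (1/t)^2 ≤ (2 - 4/t) * (1/t^2) := by
    have h4 : (4/t) * t ≤ 4 := by
      rw [div_mul_eq_mul_div, mul_div_assoc, div_self ht']
      norm_num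
    have : (1/t)^2 = 1/t^2 := by ring
    rw [this]
    have hpos2 : (0:ℝ) < 1/t^2 := by positivity
    have : (1:ℝ) ≤ 2 - 4/t := by
      have : 4/t ≤ 1 := by rw [div_le_one ht0]; linarith
      linarith
    nlinarith
  linarith
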